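/- With the doubling algorithm iterates satisfying x* - u_k = F_k x* μ*^{2^k} and ‖x* v_kᵀ‖₁ ≤ 2^k/(1+2^k), c_k = (1 - v_kᵀx*)μ*^{2^k}, and β_k = ‖c_kF_k‖₁ < 1/(2^k+1)², one has ‖x* - u_k‖₁ ≤ β_k(1+2^k)‖x*‖₁ < 1/2^k; hence u_k converges to x* at least linearly with rate 1/2. -/
import Mathlib


open Matrix Filter Topology

/-- ℓ¹ norm of a vector in ℝⁿ. -/
noncomputable def l1 {n : ℕ} (x : Fin n → ℝ) : ℝ := ∑ i, |x i|

/-- Induced operator 1-norm of a real matrix (maximum column sum). -/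
noncomputable def op1 {n : ℕ} (A : Matrix (Fin n) (Fin n) ℝ) : ℝ := ⨆ j, ∑ i, |A i j|

lemma l1_nonneg {n : ℕ} (x : Fin n → ℝ) : 0 ≤ l1 x :=
  Finset.sum_nonneg fun _ _ => abs_nonneg _

lemma op1_nonneg {n : ℕ} (A : Matrix (Fin n) (Fin n) ℝ) : 0 ≤ op1 A :=
  Real.iSup_nonneg fun _ => Finset.sum_nonneg fun _ _ => abs_nonneg _

lemma op1_smul {n : ℕ} (s : ℝ) (A : Matrix (Fin n) (Fin n) ℝ) :
    op1 (s • A) = |s| * op1 A := by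
  unfold op1
  rw [Real.mul_iSup_of_nonneg (abs_nonneg s)]
  congr 1; ext j
  rw [Finset.mul_sum]
  congr 1; ext i
  simp [abs_mul]

lemma l1_smul_nonneg {n : ℕ} {a : ℝ} (ha : 0 ≤ a) (y : Fin n → ℝ) :
    l1 (a • y) = a * l1 y := by
  unfold l1
  rw [Finset.mul_sum]
  congr 1; ext i
  simp [abs_mul, abs_of_nonneg ha]

lemma l1_mulVec_le {n : ℕ} (A : Matrix (Fin n) (Fin n) ℝ) (x : Fin n → ℝ) :
    l1 (A.mulVec x) ≤ op1 A * l1 x := by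
  unfold l1 op1 Matrix.mulVec dotProduct
  calc ∑ i, |∑ j, A i j * x j| ≤ ∑ i, ∑ j, |A i j| * |x j| := by
        refine Finset.sum_le_sum fun i _ => ?_
        refine (Finset.abs_sum_le_sum_abs _ _).trans ?_
        refine Finset.sum_le_sum fun j _ => ?_
        rw [abs_mul]
    _ = ∑ j, (∑ i, |A i j|) * |x j| := by
        rw [Finset.sum_comm]
        exact Finset.sum_congr rfl fun j _ => (Finset.sum_mul _ _ _).symm
    _ ≤ ∑ j, (⨆ j', ∑ i, |A i j'|) * |x j| := by
        refine Finset.sum_le_sum fun j _ => ?_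
        exact mul_le_mul_of_nonneg_right
          (le_ciSup (f := fun j' => ∑ i, |A i j'|)
            (Set.Finite.bddAbove (Set.finite_range _)) j) (abs_nonneg _)
    _ = (⨆ j', ∑ i, |A i j'|) * ∑ j, |x j| := (Finset.mul_sum _ _ _).symm

/-- Theorem 21 (convergence of SDA): under the identities
`x* - u_k = μ*^{2^k} F_k x*`, `c_k = (1 - v_kᵀx*) μ*^{2^k}`,
`‖x* v_kᵀ‖₁ ≤ 2^k/(1+2^k)` and `β_k = ‖c_k F_k‖₁ < 1/(2^k+1)²`, one has
`‖x* - u_k‖₁ ≤ β_k (1+2^k) ‖x*‖₁ < 1/2^k`; hence `u_k → x*` at least linearly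
with rate `1/2`. -/
theorem stmt_18 {n : ℕ} (xs : Fin n → ℝ) (hxs : ∀ i, 0 ≤ xs i)
    (μs : ℝ) (hμs : μs = l1 xs) (hμs1 : μs < 1)
    (u v : ℕ → Fin n → ℝ) (F : ℕ → Matrix (Fin n) (Fin n) ℝ) (c : ℕ → ℝ)
    (hid : ∀ k, xs - u k = μs ^ (2 ^ k) • (F k).mulVec xs)
    (hc : ∀ k, c k = (1 - dotProduct (v k) xs) * μs ^ (2 ^ k))
    (hxv : ∀ k, op1 (vecMulVec xs (v k)) ≤ (2 : ℝ) ^ k / (1 + 2 ^ k))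
    (hβ : ∀ k, op1 (c k • F k) < 1 / ((2 : ℝ) ^ k + 1) ^ 2) :
    (∀ k, l1 (xs - u k) ≤ op1 (c k • F k) * (1 + 2 ^ k) * l1 xs ∧
      l1 (xs - u k) < 1 / 2 ^ k) ∧
    Tendsto u atTop (𝓝 xs) := by
  have hμ0 : 0 ≤ μs := hμs ▸ l1_nonneg xs
  have hl1x : l1 xs = μs := hμs.symm
  have key : ∀ k, l1 (xs - u k) ≤ op1 (c k • F k) * (1 + 2 ^ k) * l1 xs ∧
      l1 (xs - u k) < 1 / 2 ^ k := by
    intro k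
    have h2k : (0:ℝ) < 2 ^ k := by positivity
    -- bound on the dot product
    have hcol : ∀ j, l1 xs * |v k j| ≤ op1 (vecMulVec xs (v k)) := by
      intro j
      have hcs : ∑ i, |vecMulVec xs (v k) i j| = l1 xs * |v k j| := by
        unfold l1
        rw [Finset.sum_mul]
        exact Finset.sum_congr rfl fun i _ => by simp [vecMulVec, abs_mul]
      calc l1 xs * |v k j| = ∑ i, |vecMulVec xs (v k) i j| := hcs.symm
        _ ≤ op1 (vecMulVec xs (v k)) :=
            le_ciSup (f := fun j' => ∑ i, |vecMulVec xs (v k) i j'|)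
              (Set.Finite.bddAbove (Set.finite_range _)) j
    have hd : dotProduct (v k) xs ≤ 2 ^ k / (1 + 2 ^ k) := by
      have ht0 : (0:ℝ) ≤ 2 ^ k / (1 + 2 ^ k) := by positivity
      rcases eq_or_lt_of_le (l1_nonneg xs) with hz | hp
      · have hx0 : ∀ i ∈ Finset.univ, |xs i| = 0 := by
          refine (Finset.sum_eq_zero_iff_of_nonneg fun i _ => abs_nonneg _).mp ?_
          exact hz.symm
        have hx0' : ∀ i, xs i = 0 := fun i =>
          abs_eq_zero.mp (hx0 i (Finset.mem_univ i))
        simp [dotProduct, hx0', ht0]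
      · have hvj : ∀ j, |v k j| ≤ (2 ^ k / (1 + 2 ^ k)) / l1 xs := by
          intro j
          rw [le_div_iff₀ hp]
          calc |v k j| * l1 xs = l1 xs * |v k j| := mul_comm _ _
            _ ≤ op1 (vecMulVec xs (v k)) := hcol j
            _ ≤ 2 ^ k / (1 + 2 ^ k) := hxv k
        have hsum : l1 xs = ∑ i, xs i :=
          Finset.sum_congr rfl fun i _ => abs_of_nonneg (hxs i)
        calc dotProduct (v k) xs = ∑ j, v k j * xs j := rfl
          _ ≤ ∑ j, ((2 ^ k / (1 + 2 ^ k)) / l1 xs) * xs j := by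
              refine Finset.sum_le_sum fun j _ => ?_
              exact mul_le_mul_of_nonneg_right
                ((le_abs_self _).trans (hvj j)) (hxs j)
          _ = ((2 ^ k / (1 + 2 ^ k)) / l1 xs) * l1 xs := by
              rw [← Finset.mul_sum, ← hsum]
          _ = 2 ^ k / (1 + 2 ^ k) := div_mul_cancel₀ _ (ne_of_gt hp)
    have hdlt : dotProduct (v k) xs < 1 := by
      refine lt_of_le_of_lt hd ?_
      rw [div_lt_one (by linarith)]
      linarith
    have hinv : 1 ≤ (1 - dotProduct (v k) xs) * (1 + 2 ^ k) := by
      have := (le_div_iff₀ (by linarith : (0:ℝ) < 1 + 2 ^ k)).mp hd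
      nlinarith
    have ha : (0:ℝ) ≤ μs ^ 2 ^ k := pow_nonneg hμ0 _
    have hc0 : 0 ≤ c k := by
      rw [hc k]; exact mul_nonneg (by linarith) ha
    have hβeq : op1 (c k • F k) = (1 - dotProduct (v k) xs) * μs ^ 2 ^ k * op1 (F k) := by
      rw [op1_smul, abs_of_nonneg hc0, hc k]
    have hF0 : 0 ≤ op1 (F k) := op1_nonneg _
    have hL : l1 (xs - u k) = μs ^ 2 ^ k * l1 ((F k).mulVec xs) := by
      rw [hid k, l1_smul_nonneg ha]
    have hml : l1 ((F k).mulVec xs) ≤ op1 (F k) * l1 xs := l1_mulVec_le _ _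
    have part1 : l1 (xs - u k) ≤ op1 (c k • F k) * (1 + 2 ^ k) * l1 xs := by
      rw [hL, hβeq]
      have h1 : μs ^ 2 ^ k * l1 ((F k).mulVec xs) ≤ μs ^ 2 ^ k * (op1 (F k) * l1 xs) :=
        mul_le_mul_of_nonneg_left hml ha
      have h2 : (0:ℝ) ≤ μs ^ 2 ^ k * (op1 (F k) * l1 xs) :=
        mul_nonneg ha (mul_nonneg hF0 (l1_nonneg xs))
      nlinarith
    refine ⟨part1, ?_⟩
    have hβ0 : 0 ≤ op1 (c k • F k) := op1_nonneg _
    have s1 : op1 (c k • F k) * (1 + 2 ^ k) * l1 xs ≤ op1 (c k • F k) * (1 + 2 ^ k) := by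
      have : (0:ℝ) ≤ op1 (c k • F k) * (1 + 2 ^ k) :=
        mul_nonneg hβ0 (by linarith)
      nlinarith [hl1x ▸ hμs1, hl1x ▸ hμ0]
    have s2 : op1 (c k • F k) * (1 + 2 ^ k) < (1 / ((2:ℝ) ^ k + 1) ^ 2) * (1 + 2 ^ k) :=
      mul_lt_mul_of_pos_right (hβ k) (by linarith)
    have s3 : (1 / ((2:ℝ) ^ k + 1) ^ 2) * (1 + 2 ^ k) = 1 / (2 ^ k + 1) := by
      field_simp
      ring
    have s4 : 1 / ((2:ℝ) ^ k + 1) < 1 / 2 ^ k :=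
      one_div_lt_one_div_of_lt h2k (by linarith)
    linarith
  refine ⟨key, ?_⟩
  rw [tendsto_pi_nhds]
  intro i
  have hb : ∀ k, |xs i - u k i| ≤ (1/2:ℝ) ^ k := by
    intro k
    have h1 : |xs i - u k i| ≤ l1 (xs - u k) := by
      unfold l1
      have : |xs i - u k i| = |(xs - u k) i| := rfl
      rw [this]
      exact Finset.single_le_sum (f := fun j => |(xs - u k) j|) (fun j _ => abs_nonneg _) (Finset.mem_univ i)
    have := (key k).2
    rw [one_div, ← inv_pow] at this
    calc |xs i - u k i| ≤ l1 (xs - u k) := h1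
      _ ≤ ((2:ℝ)⁻¹) ^ k := le_of_lt this
      _ = (1/2:ℝ) ^ k := by norm_num
  have habs : Tendsto (fun k => |xs i - u k i|) atTop (𝓝 0) :=
    squeeze_zero (fun k => abs_nonneg _) hb
      (tendsto_pow_atTop_nhds_zero_of_lt_one (by norm_num) (by norm_num))
  have hdiff : Tendsto (fun k => xs i - u k i) atTop (𝓝 0) := by
    exact (tendsto_zero_iff_abs_tendsto_zero _).mpr habs
  have := (tendsto_const_nhds (x := xs i) (f := atTop)).sub hdiff
  simpa using this
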